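/- arXiv:0905.1340 — 5 statements merged into one kernel-verified Lean document; each statement's English description precedes it below -/
import Mathlib

section
/- A semigroup S is an inverse semigroup (every element x has a unique y with xyx = x and yxy = y) if and only if S is regular (every element x has at least one such y) and all idempotents of S commute. -/
section aux
variable {S : Type*} [Semigroup S]

/-- In a semigroup with unique inverses, the product of two idempotents is idempotent. -/
private lemma prod_idem (hu : ∀ x : S, ∃! y : S, x * y * x = x ∧ y * x * y = y)
    {e f : S} (he : e * e = e) (hf : f * f = f) : (e * f) * (e * f) = e * f := by
  obtain ⟨y, ⟨h1, h2⟩, huniq⟩ := hu (e * f)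
  -- f*y*e is also an inverse of e*f
  have key1 : (e * f) * (f * y * e) * (e * f) = e * f := by
    have : (e * f) * (f * y * e) * (e * f) = (e * (f * f)) * y * ((e * e) * f) := by
      simp only [mul_assoc]
    rw [this, hf, he]; exact h1
  have key2 : (f * y * e) * (e * f) * (f * y * e) = f * y * e := by
    have : (f * y * e) * (e * f) * (f * y * e) =
        f * ((y * ((e * e) * (f * f))) * y) * e := by
      simp only [mul_assoc]
    rw [this, he, hf, h2]
  have hy : f * y * e = y := huniq _ ⟨key1, key2⟩
  -- y is idempotent
  have hyy : y * y = y := by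
    conv_lhs => rw [← hy]
    have : (f * y * e) * (f * y * e) = f * (y * (e * f) * y) * e := by
      simp only [mul_assoc]
    rw [this, h2, hy]
  -- e*f is an inverse of y, and so is y itself; uniqueness for y gives e*f = y
  obtain ⟨z, hz, hzuniq⟩ := hu y
  have hef : e * f = z := hzuniq _ ⟨by rw [h2], h1⟩
  have hyz : y = z := hzuniq _ ⟨by rw [hyy, hyy], by rw [hyy, hyy]⟩
  rw [hef, ← hyz, hyy]

end aux

/-- A semigroup `S` is an inverse semigroup (every element has a unique
semigroup inverse) iff `S` is regular and all idempotents commute. -/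
theorem inverse_semigroup_iff_regular_and_idempotents_commute
    (S : Type*) [Semigroup S] :
    (∀ x : S, ∃! y : S, x * y * x = x ∧ y * x * y = y) ↔
      ((∀ x : S, ∃ y : S, x * y * x = x ∧ y * x * y = y) ∧
        ∀ e f : S, e * e = e → f * f = f → e * f = f * e) := by
  constructor
  · intro hu
    refine ⟨fun x => (hu x).exists, fun e f he hf => ?_⟩
    have hef : (e * f) * (e * f) = e * f := prod_idem hu he hf
    have hfe : (f * e) * (f * e) = f * e := prod_idem hu hf he
    obtain ⟨y, hy, huniq⟩ := hu (e * f)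
    have inv1 : e * f = y := huniq _ ⟨by rw [hef, hef], by rw [hef, hef]⟩
    have inv2 : f * e = y := by
      refine huniq _ ⟨?_, ?_⟩
      · have : (e * f) * (f * e) * (e * f) = (e * (f * f)) * ((e * e) * f) := by
          simp only [mul_assoc]
        rw [this, hf, he]; exact hef
      · have : (f * e) * (e * f) * (f * e) = (f * (e * e)) * ((f * f) * e) := by
          simp only [mul_assoc]
        rw [this, he, hf]; exact hfe
    rw [inv1, inv2]
  · rintro ⟨hreg, hcomm⟩ x
    obtain ⟨y, h1, h2⟩ := hreg x
    refine ⟨y, ⟨h1, h2⟩, ?_⟩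
    rintro z ⟨hz1, hz2⟩
    -- idempotents
    have hxy : (x * y) * (x * y) = x * y := by rw [← mul_assoc, h1]
    have hyx : (y * x) * (y * x) = y * x := by
      rw [show (y * x) * (y * x) = y * (x * y * x) by simp only [mul_assoc], h1]
    have hxz : (x * z) * (x * z) = x * z := by rw [← mul_assoc, hz1]
    have hzx : (z * x) * (z * x) = z * x := by
      rw [show (z * x) * (z * x) = z * (x * z * x) by simp only [mul_assoc], hz1]
    have cy : y = z * x * y := by
      conv_lhs => rw [← h2, ← hz1]
      rw [show y * (x * z * x) * y = ((y * x) * (z * x)) * y by simp only [mul_assoc],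
        hcomm _ _ hyx hzx,
        show ((z * x) * (y * x)) * y = z * x * (y * (x * y)) by simp only [mul_assoc],
        ← mul_assoc y x y, h2]
    have cz : z = z * x * y := by
      conv_lhs => rw [← hz2, ← h1]
      rw [show z * (x * y * x) * z = z * ((x * y) * (x * z)) by simp only [mul_assoc],
        hcomm _ _ hxy hxz,
        show z * ((x * z) * (x * y)) = (z * (x * z)) * (x * y) by simp only [mul_assoc],
        ← mul_assoc z x z, hz2, ← mul_assoc]
    exact cz.trans cy.symm
end

section
/- In the poset of the rook monoid R_n under the natural partial order (extension of partial functions), the Möbius function satisfies μ(x,y) = (-1)^{rk(y) - rk(x)} for all x ≤ y. -/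
noncomputable instance rookFintype (n : ℕ) : Fintype (Fin n ≃. Fin n) :=
  Fintype.ofInjective (fun f => (f : Fin n → Option (Fin n))) DFunLike.coe_injective

/-- The rank of an injective partial function on `{1,...,n}`: the size of its
domain. -/
noncomputable def rookRank {n : ℕ} (σ : Fin n ≃. Fin n) : ℕ :=
  (Finset.univ.filter fun a => (σ a).isSome).card

open scoped Classical

namespace RookAux

variable {n : ℕ}

/-- domain of a partial injection as a finset -/
noncomputable def domf (σ : Fin n ≃. Fin n) : Finset (Fin n) :=
  Finset.univ.filter fun a => (σ a).isSome

lemma rookRank_eq (σ : Fin n ≃. Fin n) : rookRank σ = (domf σ).card := by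
  simp [rookRank, domf]

lemma mem_domf {σ : Fin n ≃. Fin n} {a : Fin n} : a ∈ domf σ ↔ (σ a).isSome := by
  simp [domf]

lemma domf_mono {x y : Fin n ≃. Fin n} (h : x ≤ y) : domf x ⊆ domf y := by
  intro a ha
  rw [mem_domf] at ha ⊢
  obtain ⟨b, hb⟩ := Option.isSome_iff_exists.1 ha
  have := h a b hb
  exact Option.isSome_iff_exists.2 ⟨b, this⟩

lemma eq_of_le_of_domf_eq {x z : Fin n ≃. Fin n} (h : x ≤ z) (hd : domf x = domf z) :
    x = z := by
  refine le_antisymm h ?_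
  intro a b hb
  have ha : a ∈ domf x := by
    rw [hd, mem_domf]
    exact Option.isSome_iff_exists.2 ⟨b, hb⟩
  rw [mem_domf] at ha
  obtain ⟨c, hc⟩ := Option.isSome_iff_exists.1 ha
  have := h a c hc
  have : b = c := by
    rw [Option.mem_def] at this hb
    rw [this] at hb; exact (Option.some_injective _ hb.symm)
  rw [this]; exact hc

/-- restriction of `y` to the set `S` -/
noncomputable def restr (y : Fin n ≃. Fin n) (S : Finset (Fin n)) : Fin n ≃. Fin n where
  toFun a := if a ∈ S then y a else none
  invFun b := (y.symm b).bind fun a => if a ∈ S then some a else none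
  inv a b := by
    simp only [Option.mem_def, Option.bind_eq_some_iff]
    constructor
    · rintro ⟨a', ha', h2⟩
      by_cases hS : a' ∈ S
      · rw [if_pos hS] at h2
        obtain rfl := Option.some_injective _ h2
        rw [if_pos hS]
        exact y.eq_some_iff.1 ha'
      · rw [if_neg hS] at h2; cases h2
    · intro h
      by_cases hS : a ∈ S
      · rw [if_pos hS] at h
        exact ⟨a, y.eq_some_iff.2 h, if_pos hS⟩
      · rw [if_neg hS] at h; cases h

lemma restr_le (y : Fin n ≃. Fin n) (S : Finset (Fin n)) : restr y S ≤ y := by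
  intro a b hb
  simp only [restr, Option.mem_def, PEquiv.coe_mk_apply] at hb
  split at hb
  · exact hb
  · exact absurd hb (by simp)

lemma le_restr {x y : Fin n ≃. Fin n} {S : Finset (Fin n)} (hxy : x ≤ y)
    (hS : domf x ⊆ S) : x ≤ restr y S := by
  intro a b hb
  have haS : a ∈ S := hS (mem_domf.2 (Option.isSome_iff_exists.2 ⟨b, hb⟩))
  simp only [restr, Option.mem_def, PEquiv.coe_mk_apply, if_pos haS]
  exact hxy a b hb

lemma domf_restr {y : Fin n ≃. Fin n} {S : Finset (Fin n)} (hS : S ⊆ domf y) :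
    domf (restr y S) = S := by
  ext a
  simp only [mem_domf, restr, PEquiv.coe_mk_apply]
  constructor
  · intro h
    by_contra ha
    simp [ha] at h
  · intro ha
    have := mem_domf.1 (hS ha)
    simpa [ha] using this

lemma eq_restr_of_le {z y : Fin n ≃. Fin n} (h : z ≤ y) : z = restr y (domf z) := by
  apply PEquiv.ext
  intro a
  by_cases ha : a ∈ domf z
  · obtain ⟨b, hb⟩ := Option.isSome_iff_exists.1 (mem_domf.1 ha)
    have hy : y a = some b := h a b hb
    simp [restr, ha, hb, hy]
  · have hz : z a = none := by
      by_contra hne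
      exact ha (mem_domf.2 (Option.isSome_iff_ne_none.2 hne))
    simp [restr, ha, hz]

/-- key combinatorial lemma : alternating sum over the interval -/
lemma interval_sum (x y : Fin n ≃. Fin n) (hxy : x ≤ y) :
    ∑ z ∈ Finset.univ.filter (fun z => x ≤ z ∧ z ≤ y),
      ((-1 : ℚ)) ^ (rookRank y - rookRank z) = if x = y then 1 else 0 := by
  classical
  set D : Finset (Fin n) := domf y \ domf x with hD
  have hstep1 :
      ∑ z ∈ Finset.univ.filter (fun z => x ≤ z ∧ z ≤ y),
        ((-1 : ℚ)) ^ (rookRank y - rookRank z)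
      = ∑ T ∈ D.powerset, ((-1 : ℚ)) ^ (D.card - T.card) := by
    refine Finset.sum_nbij' (fun z => domf z \ domf x)
      (fun T => restr y (domf x ∪ T)) ?_ ?_ ?_ ?_ ?_
    · intro z hz
      simp only [Finset.mem_filter, Finset.mem_univ, true_and] at hz
      rw [Finset.mem_powerset, hD]
      exact Finset.sdiff_subset_sdiff (domf_mono hz.2) le_rfl
    · intro T hT
      rw [Finset.mem_powerset, hD] at hT
      have hsub : domf x ∪ T ⊆ domf y :=
        Finset.union_subset (domf_mono hxy) (hT.trans (Finset.sdiff_subset))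
      simp only [Finset.mem_filter, Finset.mem_univ, true_and]
      exact ⟨le_restr hxy Finset.subset_union_left, restr_le _ _⟩
    · intro z hz
      simp only [Finset.mem_filter, Finset.mem_univ, true_and] at hz
      have hxz : domf x ⊆ domf z := domf_mono hz.1
      have heq : domf x ∪ (domf z \ domf x) = domf z :=
        Finset.union_sdiff_of_subset hxz
      show restr y (domf x ∪ (domf z \ domf x)) = z
      rw [heq]
      exact (eq_restr_of_le hz.2).symm
    · intro T hT
      rw [Finset.mem_powerset, hD] at hT
      have hsub : domf x ∪ T ⊆ domf y :=
        Finset.union_subset (domf_mono hxy) (hT.trans (Finset.sdiff_subset))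
      show domf (restr y (domf x ∪ T)) \ domf x = T
      rw [domf_restr hsub, Finset.union_sdiff_cancel_left (Finset.disjoint_left.2
        fun a haX haT => (Finset.mem_sdiff.1 (hT haT)).2 haX)]
    · intro z hz
      simp only [Finset.mem_filter, Finset.mem_univ, true_and] at hz
      have hxz : domf x ⊆ domf z := domf_mono hz.1
      have hzy : domf z ⊆ domf y := domf_mono hz.2
      show ((-1 : ℚ)) ^ (rookRank y - rookRank z) = ((-1 : ℚ)) ^ (D.card - (domf z \ domf x).card)
      congr 1
      have h1 := Finset.card_le_card hxz
      have h2 := Finset.card_le_card hzy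
      rw [rookRank_eq, rookRank_eq, hD,
        Finset.card_sdiff_of_subset hxz, Finset.card_sdiff_of_subset (hxz.trans hzy)]
      omega
  rw [hstep1]
  have hstep2 : ∑ T ∈ D.powerset, ((-1 : ℚ)) ^ (D.card - T.card)
      = ∑ T ∈ D.powerset, ((-1 : ℚ)) ^ T.card := by
    refine Finset.sum_nbij' (fun T => D \ T) (fun T => D \ T) ?_ ?_ ?_ ?_ ?_
    · intro T hT; simp
    · intro T hT; simp
    · intro T hT; rw [Finset.mem_powerset] at hT
      exact Finset.sdiff_sdiff_eq_self hT
    · intro T hT; rw [Finset.mem_powerset] at hT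
      exact Finset.sdiff_sdiff_eq_self hT
    · intro T hT
      rw [Finset.mem_powerset] at hT
      have h1 := Finset.card_le_card hT
      rw [Finset.card_sdiff_of_subset hT]
  have hzsum : ∑ T ∈ D.powerset, ((-1 : ℚ)) ^ T.card = if D = ∅ then 1 else 0 := by
    have h := Finset.sum_powerset_neg_one_pow_card (x := D)
    have h2 := congrArg (fun z : ℤ => (z : ℚ)) h
    push_cast at h2
    convert h2 using 2
  rw [hstep2, hzsum]
  have : D = ∅ ↔ x = y := by
    constructor
    · intro h
      have : domf y ⊆ domf x := by
        intro a ha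
        by_contra hax
        have : a ∈ D := Finset.mem_sdiff.2 ⟨ha, hax⟩
        simp [h] at this
      exact eq_of_le_of_domf_eq hxy (le_antisymm (domf_mono hxy) this)
    · rintro rfl; simp [hD]
  by_cases hxe : x = y
  · rw [if_pos hxe, if_pos (this.2 hxe)]
  · rw [if_neg hxe, if_neg fun hc => hxe (this.1 hc)]

lemma mu_self {mu : (Fin n ≃. Fin n) → (Fin n ≃. Fin n) → ℚ}
    (hmu : ∀ x y : Fin n ≃. Fin n, x ≤ y →
      ∑ z ∈ Finset.univ.filter (fun z => x ≤ z ∧ z ≤ y), mu z y =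
        if x = y then 1 else 0) (x : Fin n ≃. Fin n) : mu x x = 1 := by
  have h := hmu x x le_rfl
  have hfil : Finset.univ.filter (fun z => x ≤ z ∧ z ≤ x) = {x} := by
    ext z
    simp only [Finset.mem_filter, Finset.mem_univ, true_and, Finset.mem_singleton]
    constructor
    · rintro ⟨h1, h2⟩; exact le_antisymm h2 h1
    · rintro rfl; exact ⟨le_rfl, le_rfl⟩
  rw [hfil] at h
  simpa using h

lemma rank_lt {x z : Fin n ≃. Fin n} (h : x ≤ z) (hne : x ≠ z) :
    rookRank x < rookRank z := by
  rw [rookRank_eq, rookRank_eq]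
  refine Finset.card_lt_card (Finset.ssubset_iff_subset_ne.2 ⟨domf_mono h, ?_⟩)
  intro hd
  exact hne (eq_of_le_of_domf_eq h hd)

end RookAux

open RookAux in
open scoped Classical in
/-- In the poset of the rook monoid `R_n` under extension of partial functions
(Mathlib's partial order on `Fin n ≃. Fin n`), the Möbius function `μ`
(characterized as the inverse of the zeta function: `μ(x,y) = 0` unless
`x ≤ y`, and `∑_{x ≤ z ≤ y} μ(z,y) = δ_{x,y}` for `x ≤ y`) satisfies
`μ(x,y) = (-1)^(rk y - rk x)` for all `x ≤ y`. -/
theorem rook_monoid_mobius (n : ℕ)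
    (mu : (Fin n ≃. Fin n) → (Fin n ≃. Fin n) → ℚ)
    (hmu0 : ∀ x y : Fin n ≃. Fin n, ¬ x ≤ y → mu x y = 0)
    (hmu : ∀ x y : Fin n ≃. Fin n, x ≤ y →
      ∑ z ∈ Finset.univ.filter (fun z => x ≤ z ∧ z ≤ y), mu z y =
        if x = y then 1 else 0) :
    ∀ x y : Fin n ≃. Fin n, x ≤ y →
      mu x y = (-1 : ℚ) ^ (rookRank y - rookRank x) := by
  have key : ∀ k : ℕ, ∀ x y : Fin n ≃. Fin n, x ≤ y → rookRank y - rookRank x ≤ k →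
      mu x y = (-1 : ℚ) ^ (rookRank y - rookRank x) := by
    intro k
    induction k with
    | zero =>
      intro x y hxy hk
      have hle := rank_lt (x := x) (z := y) hxy
      have hxy' : x = y := by
        by_contra hne
        have := rank_lt hxy hne
        omega
      subst hxy'
      simp [mu_self hmu x]
    | succ k ih =>
      intro x y hxy hk
      by_cases hxe : x = y
      · subst hxe; simp [mu_self hmu x]
      · have h := hmu x y hxy
        rw [if_neg hxe] at h
        have hxmem : x ∈ Finset.univ.filter (fun z => x ≤ z ∧ z ≤ y) := by
          simp [hxy]
        rw [← Finset.add_sum_erase _ _ hxmem] at h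
        have herase : ∀ z ∈ (Finset.univ.filter (fun z => x ≤ z ∧ z ≤ y)).erase x,
            mu z y = (-1 : ℚ) ^ (rookRank y - rookRank z) := by
          intro z hz
          rw [Finset.mem_erase, Finset.mem_filter] at hz
          obtain ⟨hzx, -, hxz, hzy⟩ := hz
          have h1 : rookRank x < rookRank z := rank_lt hxz (Ne.symm hzx)
          have h2 : rookRank z ≤ rookRank y := by
            rw [rookRank_eq, rookRank_eq]
            exact Finset.card_le_card (domf_mono hzy)
          exact ih z y hzy (by omega)
        rw [Finset.sum_congr rfl herase] at h
        have hint := interval_sum x y hxy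
        rw [if_neg hxe, ← Finset.add_sum_erase _ _ hxmem] at hint
        -- h : mu x y + S = 0, hint : sign + S = 0
        have : mu x y = (-1 : ℚ) ^ (rookRank y - rookRank x) := by linarith
        exact this
  intro x y hxy
  exact key (rookRank y - rookRank x) x y hxy le_rfl
end

section
/- Let S be a finite inverse semigroup and ⌊s⌋ = Σ_{t ≤ s} μ(t,s)·t in ℂS. Then for all s, t ∈ S: ⌊s⌋·⌊t⌋ = ⌊st⌋ if s⁻¹s = tt⁻¹, and ⌊s⌋·⌊t⌋ = 0 otherwise. -/
set_option linter.unusedSectionVars false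

namespace GBX
section Basics
variable {S : Type*} [Semigroup S] [Fintype S]
variable (inv : S → S)
variable (hinv : ∀ x : S, (x * inv x * x = x ∧ inv x * x * inv x = inv x) ∧
      ∀ y : S, x * y * x = x ∧ y * x * y = y → y = inv x)

section
include hinv

lemma spec1 (x : S) : x * inv x * x = x := (hinv x).1.1
lemma spec2 (x : S) : inv x * x * inv x = inv x := (hinv x).1.2
lemma inv_uniq {x y : S} (h1 : x * y * x = x) (h2 : y * x * y = y) : y = inv x :=
  (hinv x).2 y ⟨h1, h2⟩

lemma inv_idem {e : S} (he : e * e = e) : inv e = e :=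
  (inv_uniq inv hinv (by rw [he, he]) (by rw [he, he])).symm

lemma inv_invol (x : S) : inv (inv x) = x :=
  (inv_uniq inv hinv (spec2 inv hinv x) (spec1 inv hinv x)).symm

lemma mulinv_idem (x : S) : (x * inv x) * (x * inv x) = x * inv x := by
  rw [← mul_assoc, spec1 inv hinv]

lemma invmul_idem (x : S) : (inv x * x) * (inv x * x) = inv x * x := by
  rw [← mul_assoc, mul_assoc (inv x), ← mul_assoc (inv x), spec2 inv hinv]

-- idempotent products are idempotent
lemma idem_mul {e f : S} (he : e * e = e) (hf : f * f = f) : (e * f) * (e * f) = e * f := by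
  obtain ⟨⟨h1, h2⟩, huniq⟩ := hinv (e * f)
  set x := inv (e * f) with hx
  have c1 : (e * f) * (f * x * e) * (e * f) = e * f := by
    calc (e * f) * (f * x * e) * (e * f)
        = (e * (f * f)) * x * ((e * e) * f) := by simp only [mul_assoc]
      _ = (e * f) * x * (e * f) := by rw [he, hf]
      _ = e * f := h1
  have c2 : (f * x * e) * (e * f) * (f * x * e) = f * x * e := by
    calc (f * x * e) * (e * f) * (f * x * e)
        = f * (x * ((e * e) * (f * f)) * x) * e := by simp only [mul_assoc]
      _ = f * (x * (e * f) * x) * e := by rw [he, hf]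
      _ = f * x * e := by rw [h2]
  have hxy : f * x * e = x := huniq _ ⟨c1, c2⟩
  have hxx : x * x = x := by
    conv_lhs => rw [← hxy]
    calc (f * x * e) * (f * x * e) = f * (x * (e * f) * x) * e := by simp only [mul_assoc]
      _ = f * x * e := by rw [h2]
      _ = x := hxy
  have hef : e * f = inv x := (hinv x).2 (e * f) ⟨h2, h1⟩
  rw [hef, inv_idem inv hinv hxx]
  exact hxx

lemma idem_comm {e f : S} (he : e * e = e) (hf : f * f = f) : e * f = f * e := by
  have hef := idem_mul inv hinv he hf
  have hfe := idem_mul inv hinv hf he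
  have h1 : (e * f) * (f * e) * (e * f) = e * f := by
    calc (e * f) * (f * e) * (e * f) = (e * (f * f)) * ((e * e) * f) := by simp only [mul_assoc]
      _ = (e * f) * (e * f) := by rw [he, hf]
      _ = e * f := hef
  have h2 : (f * e) * (e * f) * (f * e) = f * e := by
    calc (f * e) * (e * f) * (f * e) = (f * (e * e)) * ((f * f) * e) := by simp only [mul_assoc]
      _ = (f * e) * (f * e) := by rw [he, hf]
      _ = f * e := hfe
  have : f * e = inv (e * f) := inv_uniq inv hinv h1 h2
  rw [this, inv_idem inv hinv hef]

lemma inv_mul (x y : S) : inv (x * y) = inv y * inv x := by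
  have key : (y * inv y) * (inv x * x) = (inv x * x) * (y * inv y) :=
    idem_comm inv hinv (mulinv_idem inv hinv y) (invmul_idem inv hinv x)
  refine (inv_uniq inv hinv ?_ ?_).symm
  · calc (x * y) * (inv y * inv x) * (x * y)
        = x * ((y * inv y) * (inv x * x)) * y := by simp only [mul_assoc]
      _ = x * ((inv x * x) * (y * inv y)) * y := by rw [key]
      _ = (x * inv x * x) * (y * inv y * y) := by simp only [mul_assoc]
      _ = x * y := by rw [spec1 inv hinv, spec1 inv hinv]
  · calc (inv y * inv x) * (x * y) * (inv y * inv x)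
        = inv y * ((inv x * x) * (y * inv y)) * inv x := by simp only [mul_assoc]
      _ = inv y * ((y * inv y) * (inv x * x)) * inv x := by rw [key]
      _ = (inv y * y * inv y) * (inv x * x * inv x) := by simp only [mul_assoc]
      _ = inv y * inv x := by rw [spec2 inv hinv, spec2 inv hinv]

end
end Basics

section Order
variable {S : Type*} [Semigroup S] [Fintype S]
variable (inv : S → S)
variable (hinv : ∀ x : S, (x * inv x * x = x ∧ inv x * x * inv x = inv x) ∧
      ∀ y : S, x * y * x = x ∧ y * x * y = y → y = inv x)
variable (le : S → S → Prop) (hle : ∀ s t : S, le s t ↔ ∃ e : S, e * e = e ∧ s = e * t)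
include hinv hle

lemma le_refl' (x : S) : le x x :=
  (hle x x).2 ⟨x * inv x, mulinv_idem inv hinv x, (spec1 inv hinv x).symm⟩

lemma le_trans' {x y z : S} (h1 : le x y) (h2 : le y z) : le x z := by
  obtain ⟨e, he, rfl⟩ := (hle x y).1 h1
  obtain ⟨f, hf, rfl⟩ := (hle y z).1 h2
  exact (hle _ _).2 ⟨e * f, idem_mul inv hinv he hf, (mul_assoc e f z).symm⟩

/-- the right-sided description of the order -/
lemma le_right {x y : S} : le x y ↔ ∃ f : S, f * f = f ∧ x = y * f := by
  constructor
  · rintro h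
    obtain ⟨e, he, rfl⟩ := (hle _ y).1 h
    refine ⟨inv y * (e * y), ?_, ?_⟩
    · calc (inv y * (e * y)) * (inv y * (e * y))
          = inv y * (e * ((y * inv y) * (e * y))) := by simp only [mul_assoc]
        _ = inv y * (e * (e * ((y * inv y) * y))) := by
            rw [← mul_assoc (y * inv y) e y,
              idem_comm inv hinv (mulinv_idem inv hinv y) he, mul_assoc e (y * inv y) y]
        _ = inv y * (e * y) := by
            rw [show (y * inv y) * y = y from spec1 inv hinv y, ← mul_assoc e e y, he]
    · calc e * y = e * ((y * inv y) * y) := by rw [spec1 inv hinv y]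
        _ = (y * inv y) * (e * y) := by
            rw [← mul_assoc, idem_comm inv hinv he (mulinv_idem inv hinv y), mul_assoc]
        _ = y * (inv y * (e * y)) := by simp only [mul_assoc]
  · rintro ⟨f, hf, rfl⟩
    refine (hle _ _).2 ⟨y * (f * inv y), ?_, ?_⟩
    · calc (y * (f * inv y)) * (y * (f * inv y))
          = y * (f * ((inv y * y) * f)) * inv y := by simp only [mul_assoc]
        _ = y * (f * (f * (inv y * y))) * inv y := by
            rw [idem_comm inv hinv (invmul_idem inv hinv y) hf]
        _ = y * (f * (inv y * y)) * inv y := by rw [← mul_assoc f f, hf]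
        _ = (y * f) * ((inv y * y) * inv y) := by simp only [mul_assoc]
        _ = y * (f * inv y) := by
            rw [show (inv y * y) * inv y = inv y by rw [spec2 inv hinv], mul_assoc]
    · calc y * f = y * ((inv y * y) * f) := by
            conv_rhs => rw [← mul_assoc, ← mul_assoc, spec1 inv hinv]
        _ = y * (f * (inv y * y)) := by rw [idem_comm inv hinv (invmul_idem inv hinv y) hf]
        _ = (y * (f * inv y)) * y := by simp only [mul_assoc]

lemma le_antisymm' {x y : S} (h1 : le x y) (h2 : le y x) : x = y := by
  obtain ⟨e, he, rfl⟩ := (hle _ y).1 h1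
  obtain ⟨f, hf, hy⟩ := (hle y _).1 h2
  have hy' : y = (f * e) * y := by rw [mul_assoc]; exact hy
  calc e * y = e * ((f * e) * y) := by conv_lhs => rw [hy']
    _ = ((e * f) * e) * y := by simp only [mul_assoc]
    _ = ((f * e) * e) * y := by rw [idem_comm inv hinv he hf]
    _ = (f * (e * e)) * y := by simp only [mul_assoc]
    _ = (f * e) * y := by rw [he]
    _ = y := hy'.symm

omit hinv in
include hle in
lemma le_mul_right {x y z : S} (h : le x y) : le (x * z) (y * z) := by
  obtain ⟨e, he, rfl⟩ := (hle x y).1 h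
  exact (hle _ _).2 ⟨e, he, mul_assoc e y z⟩

lemma le_mul_left {x y z : S} (h : le x y) : le (z * x) (z * y) := by
  obtain ⟨f, hf, rfl⟩ := (le_right inv hinv le hle).1 h
  exact (le_right inv hinv le hle).2 ⟨f, hf, (mul_assoc z y f).symm⟩

lemma le_right_idem {y f : S} (hf : f * f = f) : le (y * f) y :=
  (le_right inv hinv le hle).2 ⟨f, hf, rfl⟩

omit hinv in
include hle in
lemma le_left_idem {y e : S} (he : e * e = e) : le (e * y) y := (hle _ _).2 ⟨e, he, rfl⟩

end Order

section Prod
variable {S : Type*} [Semigroup S] [Fintype S]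
variable (inv : S → S)
variable (hinv : ∀ x : S, (x * inv x * x = x ∧ inv x * x * inv x = inv x) ∧
      ∀ y : S, x * y * x = x ∧ y * x * y = y → y = inv x)
variable (le : S → S → Prop) (hle : ∀ s t : S, le s t ↔ ∃ e : S, e * e = e ∧ s = e * t)
include hinv

lemma sp1r (x : S) : x * (inv x * x) = x := by rw [← mul_assoc, spec1 inv hinv]
lemma sp2r (x : S) : inv x * (x * inv x) = inv x := by rw [← mul_assoc, spec2 inv hinv]
lemma sp1e (x z : S) : x * (inv x * (x * z)) = x * z := by
  rw [← mul_assoc, ← mul_assoc, spec1 inv hinv]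
lemma sp2e (x z : S) : inv x * (x * (inv x * z)) = inv x * z := by
  rw [← mul_assoc, ← mul_assoc, spec2 inv hinv]

omit hinv in
lemma ir {e : S} (he : e * e = e) (z : S) : e * (e * z) = e * z := by rw [← mul_assoc, he]

include hle

lemma prod_le {u v s t : S} (h1 : le u s) (h2 : le v t) : le (u * v) (s * t) :=
  le_trans' inv hinv le hle (le_mul_right le hle h1) (le_mul_left inv hinv le hle h2)

lemma x_invt_t {x s t : S} (h : le x (s * t)) : x * inv t * t = x := by
  obtain ⟨e, he, rfl⟩ := (hle _ _).1 h
  simp only [mul_assoc, sp1r inv hinv]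

lemma u_le {x s t : S} (h : le x (s * t)) : le (x * inv t) s := by
  obtain ⟨e, he, rfl⟩ := (hle _ _).1 h
  simp only [mul_assoc]
  refine le_trans' inv hinv le hle (le_left_idem le hle he) ?_
  exact (le_right inv hinv le hle).2 ⟨t * inv t, mulinv_idem inv hinv t, rfl⟩

lemma uv_eq {x s t : S} (h : le x (s * t)) : (x * inv t) * (t * (inv x * x)) = x := by
  have hxt := x_invt_t inv hinv le hle h
  have key : ∀ z : S, x * (inv t * (t * z)) = x * z := fun z => by
    rw [← mul_assoc, ← mul_assoc, hxt]
  simp only [mul_assoc, key, sp1r inv hinv]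

lemma matched_pair {x s t : S} (h : le x (s * t)) :
    inv (x * inv t) * (x * inv t) = (t * (inv x * x)) * inv (t * (inv x * x)) := by
  rw [inv_mul inv hinv x (inv t), inv_invol inv hinv t,
    inv_mul inv hinv t (inv x * x), inv_idem inv hinv (invmul_idem inv hinv x)]
  simp only [mul_assoc, sp2e inv hinv]

lemma rec_u {u v t : S} (hv : le v t) (hm : inv u * u = v * inv v) :
    (u * v) * inv t = u := by
  obtain ⟨f, hf, rfl⟩ := (le_right inv hinv le hle).1 hv
  have h1 : (t * f) * inv t = (t * f) * inv (t * f) := by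
    rw [inv_mul inv hinv t f, inv_idem inv hinv hf]
    simp only [mul_assoc, ir hf]
  rw [mul_assoc, h1, ← hm, sp1r inv hinv]

lemma rec_v {u v t : S} (hv : le v t) (hm : inv u * u = v * inv v) :
    t * (inv (u * v) * (u * v)) = v := by
  have h1 : inv (u * v) * (u * v) = inv v * v := by
    rw [inv_mul inv hinv u v]
    calc (inv v * inv u) * (u * v) = inv v * ((inv u * u) * v) := by simp only [mul_assoc]
      _ = inv v * ((v * inv v) * v) := by rw [hm]
      _ = inv v * v := by simp only [mul_assoc, sp2e inv hinv]
  rw [h1]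
  obtain ⟨f, hf, rfl⟩ := (le_right inv hinv le hle).1 hv
  have h2 : inv (t * f) * (t * f) = (inv t * t) * f := by
    rw [inv_mul inv hinv t f, inv_idem inv hinv hf]
    calc (f * inv t) * (t * f) = f * ((inv t * t) * f) := by simp only [mul_assoc]
      _ = f * (f * (inv t * t)) := by rw [idem_comm inv hinv (invmul_idem inv hinv t) hf]
      _ = f * (inv t * t) := ir hf _
      _ = (inv t * t) * f := (idem_comm inv hinv (invmul_idem inv hinv t) hf).symm
  rw [h2, ← mul_assoc, ← mul_assoc, spec1 inv hinv]

end Prod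

open scoped Classical

section Mobius
variable {S : Type*} [Semigroup S] [Fintype S]
variable (inv : S → S)
variable (hinv : ∀ x : S, (x * inv x * x = x ∧ inv x * x * inv x = inv x) ∧
      ∀ y : S, x * y * x = x ∧ y * x * y = y → y = inv x)
variable (le : S → S → Prop) (hle : ∀ s t : S, le s t ↔ ∃ e : S, e * e = e ∧ s = e * t)
variable (mu : S → S → ℂ)
variable (hmu0 : ∀ x y : S, ¬ le x y → mu x y = 0)
variable (hmu : ∀ x y : S, le x y →
      ∑ z ∈ Finset.univ.filter (fun z => le x z ∧ le z y), mu z y =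
        if x = y then 1 else 0)
include hinv hle hmu0 hmu

/-- unconditional version of `hmu` -/
lemma hmu' (x y : S) :
    ∑ z ∈ Finset.univ.filter (fun z => le x z ∧ le z y), mu z y =
      if x = y then 1 else 0 := by
  by_cases h : le x y
  · exact hmu x y h
  · rw [if_neg (by rintro rfl; exact h (le_refl' inv hinv le hle x))]
    refine Finset.sum_eq_zero fun z hz => ?_
    rw [Finset.mem_filter] at hz
    exact absurd (le_trans' inv hinv le hle hz.2.1 hz.2.2) h

/-- the dual Möbius identity, via matrix inverses -/
lemma mu_dual (x y : S) :
    ∑ z ∈ Finset.univ.filter (fun z => le x z ∧ le z y), mu x z =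
      if x = y then 1 else 0 := by
  set Z : Matrix S S ℂ := fun a b => if le a b then 1 else 0 with hZ
  set M : Matrix S S ℂ := fun a b => mu a b with hM
  have hZM : Z * M = 1 := by
    ext a b
    rw [Matrix.mul_apply, Matrix.one_apply]
    calc ∑ j, Z a j * M j b = ∑ j, if le a j then mu j b else 0 := by
          refine Finset.sum_congr rfl fun j _ => ?_
          by_cases h : le a j <;> simp [hZ, hM, h]
      _ = ∑ j ∈ Finset.univ.filter (fun j => le a j), mu j b := by
          rw [Finset.sum_filter]
      _ = ∑ j ∈ Finset.univ.filter (fun j => le a j ∧ le j b), mu j b := by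
          rw [show Finset.univ.filter (fun j => le a j ∧ le j b)
              = (Finset.univ.filter (fun j => le a j)).filter (fun j => le j b) from by
            rw [Finset.filter_filter]]
          exact (Finset.sum_filter_of_ne fun j hj hne =>
            by_contra fun h => hne (hmu0 j b h)).symm
      _ = if a = b then 1 else 0 := hmu' inv hinv le hle mu hmu0 hmu a b
  have hMZ : M * Z = 1 := mul_eq_one_comm.mp hZM
  have key := congrFun (congrFun hMZ x) y
  rw [Matrix.mul_apply, Matrix.one_apply] at key
  calc ∑ z ∈ Finset.univ.filter (fun z => le x z ∧ le z y), mu x z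
      = ∑ z ∈ Finset.univ.filter (fun z => le z y), mu x z := by
        rw [show Finset.univ.filter (fun z => le x z ∧ le z y)
            = (Finset.univ.filter (fun z => le z y)).filter (fun z => le x z) from by
          rw [Finset.filter_filter]; apply Finset.filter_congr; intro z _; exact and_comm]
        exact Finset.sum_filter_of_ne fun z hz hne =>
          by_contra fun h => hne (hmu0 x z h)
    _ = ∑ z, if le z y then mu x z else 0 := by rw [Finset.sum_filter]
    _ = ∑ z, M x z * Z z y := by
        refine Finset.sum_congr rfl fun z _ => ?_
        by_cases h : le z y <;> simp [hZ, hM, h]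
    _ = if x = y then 1 else 0 := key

/-- Möbius inversion: a function whose down-sums all vanish is zero. -/
lemma inversion {V : Type*} [AddCommGroup V] [Module ℂ V] (f : S → V)
    (hf : ∀ u : S, ∑ x ∈ Finset.univ.filter (fun x => le x u), f x = 0) (s : S) :
    f s = 0 := by
  have h0 : ∑ x ∈ Finset.univ.filter (fun x => le x s), mu x s • 
      (∑ z ∈ Finset.univ.filter (fun z => le z x), f z) = 0 := by
    refine Finset.sum_eq_zero fun x _ => ?_
    rw [hf x, smul_zero]
  have h1 : ∑ x ∈ Finset.univ.filter (fun x => le x s), mu x s •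
      (∑ z ∈ Finset.univ.filter (fun z => le z x), f z)
      = ∑ z, (∑ x ∈ Finset.univ.filter (fun x => le z x ∧ le x s), mu x s) • f z := by
    calc ∑ x ∈ Finset.univ.filter (fun x => le x s), mu x s •
        (∑ z ∈ Finset.univ.filter (fun z => le z x), f z)
        = ∑ x, ∑ z, (if le z x ∧ le x s then mu x s • f z else 0) := by
          rw [Finset.sum_filter]
          refine Finset.sum_congr rfl fun x _ => ?_
          by_cases h : le x s
          · simp only [h, if_true, and_true, Finset.smul_sum, Finset.sum_filter, smul_ite, smul_zero]
          · simp [h]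
      _ = ∑ z, ∑ x, (if le z x ∧ le x s then mu x s • f z else 0) := Finset.sum_comm
      _ = ∑ z, (∑ x ∈ Finset.univ.filter (fun x => le z x ∧ le x s), mu x s) • f z := by
          refine Finset.sum_congr rfl fun z _ => ?_
          rw [Finset.sum_filter, Finset.sum_smul]
          refine Finset.sum_congr rfl fun x _ => ?_
          by_cases h : le z x ∧ le x s <;> simp [h]
  have h2 : ∑ z, (∑ x ∈ Finset.univ.filter (fun x => le z x ∧ le x s), mu x s) • f z
      = f s := by
    calc ∑ z, (∑ x ∈ Finset.univ.filter (fun x => le z x ∧ le x s), mu x s) • f z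
        = ∑ z, (if z = s then (1:ℂ) else 0) • f z := by
          refine Finset.sum_congr rfl fun z _ => ?_
          rw [hmu' inv hinv le hle mu hmu0 hmu z s]
      _ = ∑ z, (if z = s then f z else 0) := by
          refine Finset.sum_congr rfl fun z _ => ?_
          by_cases h : z = s <;> simp [h]
      _ = f s := by rw [Finset.sum_ite_eq' Finset.univ s f]; simp
  rw [← h2, ← h1, h0]

end Mobius

section Final
variable {S : Type*} [Semigroup S] [Fintype S]
variable (inv : S → S)
variable (hinv : ∀ x : S, (x * inv x * x = x ∧ inv x * x * inv x = inv x) ∧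
      ∀ y : S, x * y * x = x ∧ y * x * y = y → y = inv x)
variable (le : S → S → Prop) (hle : ∀ s t : S, le s t ↔ ∃ e : S, e * e = e ∧ s = e * t)
variable (mu : S → S → ℂ)
variable (hmu0 : ∀ x y : S, ¬ le x y → mu x y = 0)
variable (hmu : ∀ x y : S, le x y →
      ∑ z ∈ Finset.univ.filter (fun z => le x z ∧ le z y), mu z y =
        if x = y then 1 else 0)
variable (floor : S → MonoidAlgebra ℂ S)
variable (hfloor : ∀ s : S, floor s = ∑ t ∈ Finset.univ.filter (fun t => le t s),
      MonoidAlgebra.single t (mu t s))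
include hinv hle hmu0 hmu hfloor

lemma zeta_floor (s : S) :
    ∑ x ∈ Finset.univ.filter (fun x => le x s), floor x = MonoidAlgebra.single s 1 := by
  calc ∑ x ∈ Finset.univ.filter (fun x => le x s), floor x
      = ∑ x, ∑ z, (if le z x ∧ le x s then MonoidAlgebra.single z (mu z x) else 0) := by
        rw [Finset.sum_filter]
        refine Finset.sum_congr rfl fun x _ => ?_
        by_cases h : le x s
        · simp only [h, if_true, and_true, hfloor x, Finset.sum_filter]
        · simp [h]
    _ = ∑ z, ∑ x, (if le z x ∧ le x s then MonoidAlgebra.single z (mu z x) else 0) :=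
        Finset.sum_comm
    _ = ∑ z, MonoidAlgebra.single z
          (∑ x ∈ Finset.univ.filter (fun x => le z x ∧ le x s), mu z x) := by
        refine Finset.sum_congr rfl fun z _ => ?_
        rw [show MonoidAlgebra.single z
              (∑ x ∈ Finset.univ.filter (fun x => le z x ∧ le x s), mu z x)
            = ∑ x ∈ Finset.univ.filter (fun x => le z x ∧ le x s),
                MonoidAlgebra.single z (mu z x) from
          map_sum (MonoidAlgebra.singleAddHom z) _ _, Finset.sum_filter]
    _ = ∑ z, MonoidAlgebra.single z (if z = s then (1:ℂ) else 0) := by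
        refine Finset.sum_congr rfl fun z _ => ?_
        rw [mu_dual inv hinv le hle mu hmu0 hmu z s]
    _ = ∑ z, (if z = s then MonoidAlgebra.single s (1:ℂ) else 0) := by
        refine Finset.sum_congr rfl fun z _ => ?_
        by_cases h : z = s
        · subst h; simp
        · simp [h]
    _ = MonoidAlgebra.single s 1 := by rw [Finset.sum_ite_eq' Finset.univ s]; simp

lemma sum_matched (s t : S) :
    ∑ u ∈ Finset.univ.filter (fun u => le u s), ∑ v ∈ Finset.univ.filter (fun v => le v t),
      (if inv u * u = v * inv v then floor (u * v) else 0)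
    = ∑ x ∈ Finset.univ.filter (fun x => le x (s * t)), floor x := by
  have h1 : ∑ u ∈ Finset.univ.filter (fun u => le u s),
      ∑ v ∈ Finset.univ.filter (fun v => le v t),
        (if inv u * u = v * inv v then floor (u * v) else 0)
      = ∑ p ∈ (Finset.univ ×ˢ Finset.univ).filter
          (fun p : S × S => le p.1 s ∧ le p.2 t ∧ inv p.1 * p.1 = p.2 * inv p.2),
          floor (p.1 * p.2) := by
    rw [Finset.sum_filter]
    calc ∑ u, (if le u s then ∑ v ∈ Finset.univ.filter (fun v => le v t),
            (if inv u * u = v * inv v then floor (u * v) else 0) else 0)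
        = ∑ u, ∑ v, (if le u s ∧ le v t ∧ inv u * u = v * inv v then floor (u * v) else 0) := by
          refine Finset.sum_congr rfl fun u _ => ?_
          by_cases h : le u s
          · simp only [h, true_and, if_true, Finset.sum_filter, ← ite_and]
          · simp [h]
      _ = ∑ p ∈ Finset.univ ×ˢ Finset.univ,
            (if le p.1 s ∧ le p.2 t ∧ inv p.1 * p.1 = p.2 * inv p.2
              then floor (p.1 * p.2) else 0) := (Finset.sum_product' ..).symm
      _ = ∑ p ∈ (Finset.univ ×ˢ Finset.univ).filter
            (fun p : S × S => le p.1 s ∧ le p.2 t ∧ inv p.1 * p.1 = p.2 * inv p.2),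
            floor (p.1 * p.2) := (Finset.sum_filter _ _).symm
  rw [h1]
  refine Finset.sum_nbij' (i := fun p => p.1 * p.2)
    (j := fun x => (x * inv t, t * (inv x * x))) ?_ ?_ ?_ ?_ ?_
  · rintro ⟨u, v⟩ hp
    rw [Finset.mem_filter] at hp
    obtain ⟨-, h1, h2, h3⟩ := hp
    exact Finset.mem_filter.2 ⟨Finset.mem_univ _, prod_le inv hinv le hle h1 h2⟩
  · intro x hx
    rw [Finset.mem_filter] at hx
    exact Finset.mem_filter.2 ⟨Finset.mem_product.2 ⟨Finset.mem_univ _, Finset.mem_univ _⟩,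
      u_le inv hinv le hle hx.2,
      le_right_idem inv hinv le hle (invmul_idem inv hinv x),
      matched_pair inv hinv le hle hx.2⟩
  · rintro ⟨u, v⟩ hp
    rw [Finset.mem_filter] at hp
    obtain ⟨-, h1, h2, h3⟩ := hp
    have := rec_u inv hinv le hle h2 h3
    have := rec_v inv hinv le hle h2 h3
    simp only [Prod.mk.injEq]
    exact ⟨rec_u inv hinv le hle h2 h3, rec_v inv hinv le hle h2 h3⟩
  · intro x hx
    rw [Finset.mem_filter] at hx
    exact uv_eq inv hinv le hle hx.2
  · intro p _
    rfl

end Final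

end GBX

open scoped Classical in
/-- In the semigroup algebra `ℂS` of a finite inverse semigroup `S`, the
groupoid basis elements `⌊s⌋ = ∑_{t ≤ s} μ(t,s)·t` multiply by
`⌊s⌋⌊t⌋ = ⌊st⌋` if `s⁻¹s = tt⁻¹` and `⌊s⌋⌊t⌋ = 0` otherwise. -/
theorem groupoid_basis_mul
    (S : Type*) [Semigroup S] [Fintype S]
    (inv : S → S)
    (hinv : ∀ x : S, (x * inv x * x = x ∧ inv x * x * inv x = inv x) ∧
      ∀ y : S, x * y * x = x ∧ y * x * y = y → y = inv x)
    (le : S → S → Prop) (hle : ∀ s t : S, le s t ↔ ∃ e : S, e * e = e ∧ s = e * t)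
    (mu : S → S → ℂ)
    (hmu0 : ∀ x y : S, ¬ le x y → mu x y = 0)
    (hmu : ∀ x y : S, le x y →
      ∑ z ∈ Finset.univ.filter (fun z => le x z ∧ le z y), mu z y =
        if x = y then 1 else 0)
    (floor : S → MonoidAlgebra ℂ S)
    (hfloor : ∀ s : S, floor s = ∑ t ∈ Finset.univ.filter (fun t => le t s),
      MonoidAlgebra.single t (mu t s)) :
    ∀ s t : S,
      (inv s * s = t * inv t → floor s * floor t = floor (s * t)) ∧
      (inv s * s ≠ t * inv t → floor s * floor t = 0) := by
  intro s t
  set H : S → S → MonoidAlgebra ℂ S := fun u v =>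
    floor u * floor v - if inv u * u = v * inv v then floor (u * v) else 0 with hH
  have step1 : ∀ a b : S, ∑ u ∈ Finset.univ.filter (fun u => le u a),
      ∑ v ∈ Finset.univ.filter (fun v => le v b), H u v = 0 := by
    intro a b
    have e1 : ∑ u ∈ Finset.univ.filter (fun u => le u a),
        ∑ v ∈ Finset.univ.filter (fun v => le v b), (floor u * floor v)
        = MonoidAlgebra.single (a * b) 1 := by
      rw [← Finset.sum_mul_sum,
        GBX.zeta_floor inv hinv le hle mu hmu0 hmu floor hfloor a,
        GBX.zeta_floor inv hinv le hle mu hmu0 hmu floor hfloor b,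
        MonoidAlgebra.single_mul_single, one_mul]
    have e2 : ∑ u ∈ Finset.univ.filter (fun u => le u a),
        ∑ v ∈ Finset.univ.filter (fun v => le v b),
          (if inv u * u = v * inv v then floor (u * v) else 0)
        = MonoidAlgebra.single (a * b) 1 := by
      rw [GBX.sum_matched inv hinv le hle mu hmu0 hmu floor hfloor a b,
        GBX.zeta_floor inv hinv le hle mu hmu0 hmu floor hfloor (a * b)]
    calc ∑ u ∈ Finset.univ.filter (fun u => le u a),
        ∑ v ∈ Finset.univ.filter (fun v => le v b), H u v
        = (∑ u ∈ Finset.univ.filter (fun u => le u a),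
            ∑ v ∈ Finset.univ.filter (fun v => le v b), (floor u * floor v))
          - ∑ u ∈ Finset.univ.filter (fun u => le u a),
            ∑ v ∈ Finset.univ.filter (fun v => le v b),
              (if inv u * u = v * inv v then floor (u * v) else 0) := by
          simp only [hH, Finset.sum_sub_distrib]
      _ = 0 := by rw [e1, e2, sub_self]
  have step2 : ∀ a b : S, H a b = 0 := by
    intro a b
    have k1 : ∀ c a : S, ∑ v ∈ Finset.univ.filter (fun v => le v c), H a v = 0 := fun c =>
      GBX.inversion inv hinv le hle mu hmu0 hmu
        (fun u => ∑ v ∈ Finset.univ.filter (fun v => le v c), H u v) (fun a' => step1 a' c)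
    exact GBX.inversion inv hinv le hle mu hmu0 hmu (fun v => H a v) (fun c => k1 c a) b
  have hst := step2 s t
  rw [hH] at hst
  simp only [sub_eq_zero] at hst
  constructor
  · intro hm
    rw [hst, if_pos hm]
  · intro hm
    rw [hst, if_neg hm]
end

section
/- For n ≥ 3 and a finite group G, the cardinality of G ≀ R_n satisfies |G ≀ R_n| = (2n-1)|G|·|G ≀ R_{n-1}| + |G ≀ R_{n-1}| - (n-1)^2 |G|^2 |G ≀ R_{n-2}|. -/
open Function Finset

namespace RookAux

variable {α : Type*} [Fintype α] [DecidableEq α] {G : Type*}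

/-- The partial function associated to a finset and an embedding of it. -/
def J (p : Σ D : Finset α, (↥D ↪ α)) : α → Option α :=
  fun a => if h : a ∈ p.1 then some (p.2 ⟨a, h⟩) else none

omit [Fintype α] in
theorem J_injective : Injective (J (α := α)) := by
  rintro ⟨D₁, e₁⟩ ⟨D₂, e₂⟩ h
  have hD : D₁ = D₂ := by
    ext a
    have := congrFun h a
    by_cases h1 : a ∈ D₁ <;> by_cases h2 : a ∈ D₂ <;>
      simp only [J, h1, h2, dif_pos, dif_neg, not_false_iff] at this ⊢ <;> tauto
  subst hD
  suffices he : e₁ = e₂ by rw [he]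
  ext ⟨a, ha⟩
  have := congrFun h a
  simpa only [J, dif_pos ha, Option.some_inj] using this

/-- The PEquiv built from a finset and an embedding of it. -/
noncomputable def toPequiv (p : Σ D : Finset α, (↥D ↪ α)) : α ≃. α where
  toFun := J p
  invFun b := (Function.partialInv (fun a : p.1 => (p.2 a : α)) b).map Subtype.val
  inv a b := by
    have hp := Function.partialInv_of_injective
      (f := fun a : p.1 => (p.2 a : α)) (fun x y hxy => p.2.injective hxy)
    constructor
    · rintro h
      simp only [Option.mem_def, Option.map_eq_some_iff] at h
      obtain ⟨a', ha', rfl⟩ := h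
      rw [hp] at ha'
      simp only [Option.mem_def, J]
      rw [dif_pos a'.2]
      simp [← ha']
    · intro h
      simp only [Option.mem_def, J] at h
      by_cases hd : a ∈ p.1
      · rw [dif_pos hd] at h
        have : partialInv (fun a : p.1 => (p.2 a : α)) b = some ⟨a, hd⟩ := by
          rw [hp]; exact Option.some_inj.mp h |>.symm ▸ rfl
        simp [Option.mem_def, Option.map_eq_some_iff, this]
      · rw [dif_neg hd] at h; exact absurd h (by simp)

/-- The forward map from partial equivalences to (domain, embedding) pairs. -/
def F (σ : α ≃. α) : Σ D : Finset α, (↥D ↪ α) :=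
  ⟨univ.filter (fun a => (σ a).isSome),
    ⟨fun a => (σ a.1).get ((Finset.mem_filter.mp a.2).2),
     by
      rintro ⟨a, ha⟩ ⟨b, hb⟩ hab
      have ha' : (σ a).isSome := (Finset.mem_filter.mp ha).2
      have hb' : (σ b).isSome := (Finset.mem_filter.mp hb).2
      have hσ : σ a = σ b := by
        rw [← Option.some_get ha', ← Option.some_get hb']
        exact congrArg some hab
      have h1 : (σ a).get ha' ∈ σ a := by simp
      have h2 : (σ a).get ha' ∈ σ b := by rw [Option.mem_def, ← hσ]; simp
      exact Subtype.ext (σ.inj h1 h2)⟩⟩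

theorem J_F (σ : α ≃. α) : J (F σ) = fun a => σ a := by
  funext a
  by_cases h : (σ a).isSome
  · rw [J, dif_pos (by simp [F, h])]
    exact Option.some_get h
  · rw [J, dif_neg (by simp [F, h])]
    simp only [Option.not_isSome_iff_eq_none] at h
    exact h.symm

theorem F_bijective : Bijective (F (α := α)) := by
  constructor
  · intro σ τ h
    apply PEquiv.ext
    intro a
    have := congrArg J h
    rw [J_F, J_F] at this
    exact congrFun this a
  · intro p
    refine ⟨toPequiv p, J_injective ?_⟩
    rw [J_F]
    rfl

/-- Equivalence between the wreath-product model and (domain, embedding, labels) triples. -/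
noncomputable def wreathEquiv (G : Type*) :
    ((σ : α ≃. α) × ({a : α // (σ a).isSome} → G)) ≃
      (Σ D : Finset α, ((↥D ↪ α) × (↥D → G))) :=
  ((Equiv.sigmaCongr (Equiv.ofBijective F F_bijective)
      (fun σ => Equiv.arrowCongr
        (Equiv.subtypeEquivRight (fun a => by
          simp [Equiv.ofBijective, F, Finset.mem_filter])) (Equiv.refl G))).trans
    (Equiv.sigmaAssoc (fun (D : Finset α) (_ : ↥D ↪ α) => ({a : α // a ∈ D} → G)))).trans
    (Equiv.sigmaCongrRight (fun D => Equiv.sigmaEquivProd _ _))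

/-- The rook polynomial-style counting function. -/
def t (g m n : ℕ) : ℕ := ∑ k ∈ Finset.range (m + 1), m.choose k * (n.descFactorial k * g ^ k)

theorem card_eq [Fintype G] (m : ℕ) :
    Nat.card ((σ : Fin m ≃. Fin m) × ({a : Fin m // (σ a).isSome} → G)) =
      t (Fintype.card G) m m := by
  rw [Nat.card_congr (wreathEquiv G), Nat.card_eq_fintype_card, Fintype.card_sigma]
  have : ∀ D : Finset (Fin m), Fintype.card ((↥D ↪ Fin m) × (↥D → G)) =
      m.descFactorial D.card * Fintype.card G ^ D.card := by
    intro D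
    rw [Fintype.card_prod, Fintype.card_embedding_eq, Fintype.card_fun,
      Fintype.card_coe, Fintype.card_fin]
  simp_rw [this]
  rw [show (univ : Finset (Finset (Fin m))) = (univ : Finset (Fin m)).powerset from
    (Finset.powerset_univ).symm]
  rw [Finset.sum_powerset_apply_card (fun k => m.descFactorial k * Fintype.card G ^ k)]
  simp [t, Finset.card_univ, mul_assoc]

theorem t_symm (g m n : ℕ) : t g m n = t g n m := by
  have key : ∀ a b : ℕ, t g a b =
      ∑ k ∈ Finset.range (a + b + 1), a.choose k * (b.descFactorial k * g ^ k) := by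
    intro a b
    rw [t]
    apply Finset.sum_subset (Finset.range_subset_range.mpr (by omega))
    intro k _ hk
    rw [Finset.mem_range, not_lt] at hk
    rw [Nat.choose_eq_zero_of_lt (by omega), zero_mul]
  rw [key, key, show n + m = m + n from by omega]
  apply Finset.sum_congr rfl
  intro k _
  rw [Nat.descFactorial_eq_factorial_mul_choose, Nat.descFactorial_eq_factorial_mul_choose]
  ring

theorem t_rec (g m n : ℕ) : t g (m + 1) (n + 1) = t g m (n + 1) + (n + 1) * g * t g m n := by
  rw [t, t, t, Finset.mul_sum,
    Finset.sum_range_succ' (fun k => (m + 1).choose k * ((n + 1).descFactorial k * g ^ k)) (m + 1),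
    Finset.sum_range_succ' (fun k => m.choose k * ((n + 1).descFactorial k * g ^ k)) m]
  have hext : ∑ k ∈ Finset.range m, m.choose (k + 1) * ((n + 1).descFactorial (k + 1) * g ^ (k + 1))
      = ∑ k ∈ Finset.range (m + 1),
          m.choose (k + 1) * ((n + 1).descFactorial (k + 1) * g ^ (k + 1)) := by
    rw [Finset.sum_range_succ, Nat.choose_succ_self, zero_mul, add_zero]
  simp only [Nat.choose_zero_right, Nat.descFactorial_zero, pow_zero, mul_one, one_mul]
  rw [hext, add_right_comm]
  congr 1
  rw [← Finset.sum_add_distrib]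
  apply Finset.sum_congr rfl
  intro k _
  rw [Nat.choose_succ_succ' , Nat.succ_descFactorial_succ, pow_succ]
  ring

end RookAux

/-- For `n ≥ 3` and a finite group `G`, the cardinality of the rook wreath
product `G ≀ R_n` (modeled as pairs of an injective partial function on
`{1,...,n}` and a `G`-labeling of its domain) satisfies
`|G ≀ R_n| = (2n-1)|G|·|G ≀ R_{n-1}| + |G ≀ R_{n-1}| - (n-1)²|G|²·|G ≀ R_{n-2}|`
(stated additively to avoid natural subtraction). -/
theorem rook_wreath_product_card_recursion
    (G : Type*) [Group G] [Fintype G] (n : ℕ) (hn : 3 ≤ n) :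
    Nat.card ((σ : Fin n ≃. Fin n) × ({a : Fin n // (σ a).isSome} → G)) +
        (n - 1) ^ 2 * Fintype.card G ^ 2 *
          Nat.card ((σ : Fin (n - 2) ≃. Fin (n - 2)) ×
            ({a : Fin (n - 2) // (σ a).isSome} → G)) =
      (2 * n - 1) * Fintype.card G *
          Nat.card ((σ : Fin (n - 1) ≃. Fin (n - 1)) ×
            ({a : Fin (n - 1) // (σ a).isSome} → G)) +
        Nat.card ((σ : Fin (n - 1) ≃. Fin (n - 1)) ×
          ({a : Fin (n - 1) // (σ a).isSome} → G)) := by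
  classical
  obtain ⟨m, rfl⟩ : ∃ m, n = m + 2 := ⟨n - 2, by omega⟩
  have h2 : m + 2 - 2 = m := by omega
  have h1 : m + 2 - 1 = m + 1 := by omega
  have h3 : 2 * (m + 2) - 1 = 2 * m + 3 := by omega
  rw [h1, h2, h3, RookAux.card_eq, RookAux.card_eq, RookAux.card_eq]
  set g := Fintype.card G
  have e1 : RookAux.t g (m + 2) (m + 2) =
      RookAux.t g (m + 1) (m + 2) + (m + 2) * g * RookAux.t g (m + 1) (m + 1) :=
    RookAux.t_rec g (m + 1) (m + 1)
  have e2 : RookAux.t g (m + 1) (m + 2) =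
      RookAux.t g (m + 1) (m + 1) + (m + 1) * g * RookAux.t g m (m + 1) := by
    rw [RookAux.t_symm g (m + 1) (m + 2), RookAux.t_rec g (m + 1) m, RookAux.t_symm g (m + 1) m]
  have e3 : RookAux.t g (m + 1) (m + 1) =
      RookAux.t g m (m + 1) + (m + 1) * g * RookAux.t g m m :=
    RookAux.t_rec g m m
  rw [e1, e2, e3]
  ring
end

section
/- Let S be a finite inverse semigroup with D-classes D_0,...,D_n, let r_k be the number of idempotents in D_k, and let G_k be the maximal subgroup at a chosen idempotent e_k ∈ D_k. Then |S| = Σ_{k=0}^n r_k^2 · |G_k|. -/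
namespace InvSgp

variable {S : Type*} [Semigroup S]

theorem cont {a b c : S} (h : a * b = c) (r : S) : a * (b * r) = c * r := by
  rw [← mul_assoc, h]

variable (inv : S → S)
  (hinv : ∀ x : S, (x * inv x * x = x ∧ inv x * x * inv x = inv x) ∧
      ∀ y : S, x * y * x = x ∧ y * x * y = y → y = inv x)

include hinv

theorem mii (x : S) : x * inv x * x = x := (hinv x).1.1
theorem imi (x : S) : inv x * x * inv x = inv x := (hinv x).1.2
theorem inv_uniq {x y : S} (h1 : x * y * x = x) (h2 : y * x * y = y) : y = inv x :=
  (hinv x).2 y ⟨h1, h2⟩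
theorem inv_invo (x : S) : inv (inv x) = x :=
  (inv_uniq inv hinv (imi inv hinv x) (mii inv hinv x)).symm
theorem inv_idem {e : S} (he : e * e = e) : inv e = e :=
  (inv_uniq inv hinv (by rw [he, he]) (by rw [he, he])).symm

theorem A (x r : S) : x * (inv x * (x * r)) = x * r := by
  rw [← mul_assoc, ← mul_assoc, mii inv hinv]
theorem B (x r : S) : inv x * (x * (inv x * r)) = inv x * r := by
  rw [← mul_assoc, ← mul_assoc, imi inv hinv]

theorem mi_idem (x : S) : (x * inv x) * (x * inv x) = x * inv x := by
  calc (x * inv x) * (x * inv x) = (x * inv x * x) * inv x := by simp only [mul_assoc]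
    _ = x * inv x := by rw [mii inv hinv]

theorem im_idem (x : S) : (inv x * x) * (inv x * x) = inv x * x := by
  calc (inv x * x) * (inv x * x) = (inv x * x * inv x) * x := by simp only [mul_assoc]
    _ = inv x * x := by rw [imi inv hinv]

theorem mul_idem {e f : S} (he : e * e = e) (hf : f * f = f) :
    (e * f) * (e * f) = e * f := by
  set x := inv (e * f) with hx
  have key : x * (e * (f * (x * e))) = x * e := by
    have h := imi inv hinv (e * f)
    calc x * (e * (f * (x * e))) = (x * (e * f) * x) * e := by simp only [mul_assoc]
      _ = x * e := by rw [h]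
  have h1 : (e * f) * (f * x * e) * (e * f) = e * f := by
    have h := mii inv hinv (e * f)
    calc (e * f) * (f * x * e) * (e * f)
        = e * (f * (f * (x * (e * (e * f))))) := by simp only [mul_assoc]
      _ = e * (f * (x * (e * f))) := by rw [cont hf, cont he]
      _ = (e * f) * x * (e * f) := by simp only [mul_assoc]
      _ = e * f := h
  have h2 : (f * x * e) * (e * f) * (f * x * e) = f * x * e := by
    calc (f * x * e) * (e * f) * (f * x * e)
        = f * (x * (e * (e * (f * (f * (x * e)))))) := by simp only [mul_assoc]
      _ = f * (x * (e * (f * (x * e)))) := by rw [cont he, cont hf]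
      _ = f * (x * e) := by rw [key]
      _ = f * x * e := by rw [mul_assoc]
  have hxe : f * x * e = x := by rw [inv_uniq inv hinv h1 h2, ← hx]
  have hxx : x * x = x := by
    calc x * x = (f * x * e) * (f * x * e) := by rw [hxe]
      _ = f * (x * (e * (f * (x * e)))) := by simp only [mul_assoc]
      _ = f * (x * e) := by rw [key]
      _ = x := by rw [← mul_assoc, hxe]
  have h3 : inv x = x := inv_idem inv hinv hxx
  have h4 : e * f = x := by
    have h5 := inv_invo inv hinv (e * f)
    rw [← hx] at h5
    rw [← h5, h3]
  rw [h4, hxx]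

theorem idem_comm {e f : S} (he : e * e = e) (hf : f * f = f) : e * f = f * e := by
  have hef := mul_idem inv hinv he hf
  have hfe := mul_idem inv hinv hf he
  have h1 : (e * f) * (f * e) * (e * f) = e * f := by
    calc (e * f) * (f * e) * (e * f)
        = e * (f * (f * (e * (e * f)))) := by simp only [mul_assoc]
      _ = e * (f * (e * f)) := by rw [cont hf, cont he]
      _ = (e * f) * (e * f) := by simp only [mul_assoc]
      _ = e * f := hef
  have h2 : (f * e) * (e * f) * (f * e) = f * e := by
    calc (f * e) * (e * f) * (f * e)
        = f * (e * (e * (f * (f * e)))) := by simp only [mul_assoc]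
      _ = f * (e * (f * e)) := by rw [cont he, cont hf]
      _ = (f * e) * (f * e) := by simp only [mul_assoc]
      _ = f * e := hfe
  have h3 := inv_uniq inv hinv h1 h2
  rw [h3, inv_idem inv hinv hef]

theorem inv_mul_rev (x y : S) : inv (x * y) = inv y * inv x := by
  have hc : (y * inv y) * (inv x * x) = (inv x * x) * (y * inv y) :=
    idem_comm inv hinv (mi_idem inv hinv y) (im_idem inv hinv x)
  have h1 : (x * y) * (inv y * inv x) * (x * y) = x * y := by
    calc (x * y) * (inv y * inv x) * (x * y)
        = x * ((y * inv y) * (inv x * x)) * y := by simp only [mul_assoc]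
      _ = x * ((inv x * x) * (y * inv y)) * y := by rw [hc]
      _ = (x * inv x * x) * (y * inv y * y) := by simp only [mul_assoc]
      _ = x * y := by rw [mii inv hinv, mii inv hinv]
  have h2 : (inv y * inv x) * (x * y) * (inv y * inv x) = inv y * inv x := by
    calc (inv y * inv x) * (x * y) * (inv y * inv x)
        = inv y * ((inv x * x) * (y * inv y)) * inv x := by simp only [mul_assoc]
      _ = inv y * ((y * inv y) * (inv x * x)) * inv x := by rw [hc]
      _ = (inv y * y * inv y) * (inv x * x * inv x) := by simp only [mul_assoc]
      _ = inv y * inv x := by rw [imi inv hinv, imi inv hinv]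
  exact (inv_uniq inv hinv h1 h2).symm


theorem R_idem {a b : S} (h : ∃ u : S, inv u * u = a ∧ u * inv u = b) : a * a = a := by
  obtain ⟨u, h1, h2⟩ := h
  rw [← h1]; exact im_idem inv hinv u

theorem R_idem' {a b : S} (h : ∃ u : S, inv u * u = a ∧ u * inv u = b) : b * b = b := by
  obtain ⟨u, h1, h2⟩ := h
  rw [← h2]; exact mi_idem inv hinv u

theorem R_refl {a : S} (ha : a * a = a) : ∃ u : S, inv u * u = a ∧ u * inv u = a :=
  ⟨a, by rw [inv_idem inv hinv ha, ha], by rw [inv_idem inv hinv ha, ha], ⟩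

theorem R_symm {a b : S} (h : ∃ u : S, inv u * u = a ∧ u * inv u = b) :
    ∃ u : S, inv u * u = b ∧ u * inv u = a := by
  obtain ⟨u, h1, h2⟩ := h
  exact ⟨inv u, by rw [inv_invo inv hinv, h2], by rw [inv_invo inv hinv, h1]⟩

theorem R_trans {a b c : S} (hab : ∃ u : S, inv u * u = a ∧ u * inv u = b)
    (hbc : ∃ u : S, inv u * u = b ∧ u * inv u = c) :
    ∃ u : S, inv u * u = a ∧ u * inv u = c := by
  have ha : a * a = a := R_idem inv hinv hab
  have hc : c * c = c := R_idem' inv hinv hbc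
  obtain ⟨u, hu1, hu2⟩ := hab
  obtain ⟨w, hw1, hw2⟩ := hbc
  refine ⟨w * u, ?_, ?_⟩
  · rw [inv_mul_rev inv hinv]
    calc inv u * inv w * (w * u) = inv u * (inv w * (w * u)) := by rw [mul_assoc]
      _ = inv u * (b * u) := by rw [cont hw1]
      _ = inv u * (u * (inv u * u)) := by rw [← hu2]; simp only [mul_assoc]
      _ = inv u * u := by rw [hu1, cont hu1, ha]
      _ = a := hu1
  · rw [inv_mul_rev inv hinv]
    calc w * u * (inv u * inv w) = w * (u * (inv u * inv w)) := by rw [mul_assoc]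
      _ = w * (b * inv w) := by rw [cont hu2]
      _ = w * (inv w * (w * inv w)) := by rw [← hw1]; simp only [mul_assoc]
      _ = w * inv w := by rw [hw2, cont hw2, hc]
      _ = c := hw2


section Helpers
variable {e u v s g f f' : S}

theorem G1 (hu1 : inv u * u = s * inv s) (hv1 : inv v * v = inv s * s)
    (hv2 : v * inv v = e) : inv (u * s * inv v) * (u * s * inv v) = e := by
  calc inv (u * s * inv v) * (u * s * inv v)
      = v * (inv s * (inv u * (u * (s * inv v)))) := by
        rw [inv_mul_rev inv hinv, inv_mul_rev inv hinv, inv_invo inv hinv]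
        simp only [mul_assoc]
    _ = v * (inv s * ((s * inv s) * (s * inv v))) := by rw [cont hu1]
    _ = v * (inv s * (s * inv v)) := by
        rw [mul_assoc s (inv s) (s * inv v), B inv hinv]
    _ = v * ((inv v * v) * inv v) := by
        rw [← mul_assoc (inv s) s (inv v), ← hv1]
    _ = v * inv v := by rw [imi inv hinv]
    _ = e := hv2

theorem G2 (hu1 : inv u * u = s * inv s) (hu2 : u * inv u = e)
    (hv1 : inv v * v = inv s * s) : (u * s * inv v) * inv (u * s * inv v) = e := by
  calc (u * s * inv v) * inv (u * s * inv v)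
      = u * (s * (inv v * (v * (inv s * inv u)))) := by
        rw [inv_mul_rev inv hinv, inv_mul_rev inv hinv, inv_invo inv hinv]
        simp only [mul_assoc]
    _ = u * (s * ((inv s * s) * (inv s * inv u))) := by rw [cont hv1]
    _ = u * (s * (inv s * inv u)) := by
        rw [mul_assoc (inv s) s (inv s * inv u), A inv hinv]
    _ = u * ((inv u * u) * inv u) := by
        rw [← mul_assoc s (inv s) (inv u), ← hu1]
    _ = u * inv u := by rw [imi inv hinv]
    _ = e := hu2

theorem J (hu1 : inv u * u = s * inv s) (hv1 : inv v * v = inv s * s) :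
    inv u * (u * s * inv v) * v = s := by
  calc inv u * (u * s * inv v) * v
      = inv u * (u * (s * (inv v * v))) := by simp only [mul_assoc]
    _ = (s * inv s) * (s * (inv s * s)) := by rw [hv1, cont hu1]
    _ = s * (inv s * (s * (inv s * s))) := by simp only [mul_assoc]
    _ = s * (inv s * s) := by rw [B inv hinv]
    _ = s := by rw [← mul_assoc, mii inv hinv]

theorem T1 (hu2 : u * inv u = e) (hv1 : inv v * v = f') (hv2 : v * inv v = e)
    (hg1 : inv g * g = e) (hg2 : g * inv g = e) :
    inv (inv u * g * v) * (inv u * g * v) = f' := by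
  calc inv (inv u * g * v) * (inv u * g * v)
      = inv v * (inv g * (u * (inv u * (g * v)))) := by
        rw [inv_mul_rev inv hinv, inv_mul_rev inv hinv, inv_invo inv hinv]
        simp only [mul_assoc]
    _ = inv v * (inv g * (e * (g * v))) := by rw [cont hu2]
    _ = inv v * (inv g * ((g * inv g) * (g * v))) := by rw [← hg2]
    _ = inv v * (inv g * (g * v)) := by
        rw [mul_assoc g (inv g) (g * v), B inv hinv]
    _ = inv v * (e * v) := by rw [cont hg1]
    _ = inv v * ((v * inv v) * v) := by rw [← hv2]
    _ = inv v * v := by rw [mul_assoc v (inv v) v, B inv hinv]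
    _ = f' := hv1

theorem T2 (hu1 : inv u * u = f) (hu2 : u * inv u = e) (hv2 : v * inv v = e)
    (hg1 : inv g * g = e) (hg2 : g * inv g = e) :
    (inv u * g * v) * inv (inv u * g * v) = f := by
  calc (inv u * g * v) * inv (inv u * g * v)
      = inv u * (g * (v * (inv v * (inv g * u)))) := by
        rw [inv_mul_rev inv hinv, inv_mul_rev inv hinv, inv_invo inv hinv]
        simp only [mul_assoc]
    _ = inv u * (g * (e * (inv g * u))) := by rw [cont hv2]
    _ = inv u * (g * ((inv g * g) * (inv g * u))) := by rw [← hg1]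
    _ = inv u * (g * (inv g * u)) := by
        rw [mul_assoc (inv g) g (inv g * u), A inv hinv]
    _ = inv u * (e * u) := by rw [← mul_assoc g (inv g) u, hg2]
    _ = inv u * ((u * inv u) * u) := by rw [← hu2]
    _ = inv u * u := by rw [mul_assoc u (inv u) u, B inv hinv]
    _ = f := hu1

theorem T3 (hu2 : u * inv u = e) (hv2 : v * inv v = e)
    (hg1 : inv g * g = e) (hg2 : g * inv g = e) :
    u * (inv u * g * v) * inv v = g := by
  calc u * (inv u * g * v) * inv v
      = u * (inv u * (g * (v * inv v))) := by simp only [mul_assoc]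
    _ = u * (inv u * (g * e)) := by rw [hv2]
    _ = u * (inv u * (g * (inv g * g))) := by rw [← hg1]
    _ = e * (g * (inv g * g)) := by rw [cont hu2]
    _ = (g * inv g) * (g * (inv g * g)) := by rw [← hg2]
    _ = g * (inv g * (g * (inv g * g))) := by simp only [mul_assoc]
    _ = g * (inv g * g) := by rw [A inv hinv]
    _ = g := by rw [← mul_assoc, mii inv hinv]

end Helpers

end InvSgp

open InvSgp

open scoped Classical in
/-- Let `S` be a finite inverse semigroup with (pairwise distinct) `D`-classes
`D_0, ..., D_n` (where `s D t` iff the idempotents `s⁻¹s` and `t⁻¹t` are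
isomorphic), let `r_k` be the number of idempotents in `D_k`, and let `G_k` be
the maximal subgroup at a chosen idempotent `e_k ∈ D_k`. Then
`|S| = ∑_{k=0}^{n} r_k² · |G_k|`. -/
theorem card_inverse_semigroup_eq_sum_over_D_classes
    (S : Type*) [Semigroup S] [Fintype S]
    (inv : S → S)
    (hinv : ∀ x : S, (x * inv x * x = x ∧ inv x * x * inv x = inv x) ∧
      ∀ y : S, x * y * x = x ∧ y * x * y = y → y = inv x)
    (n : ℕ) (D : Fin (n + 1) → Finset S) (e : Fin (n + 1) → S)
    (he : ∀ k, e k * e k = e k ∧ e k ∈ D k)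
    (hD : ∀ k, ∀ s : S, s ∈ D k ↔
      ∃ u : S, inv u * u = inv s * s ∧ u * inv u = inv (e k) * e k)
    (hcover : ∀ s : S, ∃ k, s ∈ D k)
    (hdistinct : ∀ k j, k ≠ j → D k ≠ D j) :
    Fintype.card S =
      ∑ k : Fin (n + 1),
        ((D k).filter fun x => x * x = x).card ^ 2 *
          (Finset.univ.filter fun x : S =>
            inv x * x = e k ∧ x * inv x = e k).card := by
  have hDk : ∀ k, ∀ s : S, s ∈ D k ↔
      ∃ u : S, inv u * u = inv s * s ∧ u * inv u = e k := by
    intro k s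
    rw [hD k s, inv_idem inv hinv (he k).1, (he k).1]
  have hdisj : ∀ k j : Fin (n + 1), k ≠ j → Disjoint (D k) (D j) := by
    intro k j hkj
    rw [Finset.disjoint_left]
    by_contra hnd
    push_neg at hnd
    obtain ⟨s, hsk, hsj⟩ := hnd
    have hkj2 : ∃ u : S, inv u * u = e k ∧ u * inv u = e j :=
      R_trans inv hinv (R_symm inv hinv ((hDk k s).1 hsk)) ((hDk j s).1 hsj)
    refine hdistinct k j hkj ?_
    ext t
    rw [hDk k t, hDk j t]
    exact ⟨fun h => R_trans inv hinv h hkj2,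
      fun h => R_trans inv hinv h (R_symm inv hinv hkj2)⟩
  have hcard1 : Fintype.card S = ∑ k, (D k).card := by
    rw [← Finset.card_univ]
    have huniv : (Finset.univ : Finset S) = Finset.univ.biUnion D := by
      ext s; simpa using hcover s
    rw [huniv, Finset.card_biUnion]
    intro k _ j _ hkj
    exact hdisj k j hkj
  rw [hcard1]
  refine Finset.sum_congr rfl fun k _ => ?_
  -- fix the class k
  have hee : e k * e k = e k := (he k).1
  -- choice of connecting elements
  have hex : ∀ f : S, ∃ u : S, (∃ w : S, inv w * w = f ∧ w * inv w = e k) →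
      inv u * u = f ∧ u * inv u = e k := by
    intro f
    by_cases h : ∃ w : S, inv w * w = f ∧ w * inv w = e k
    · obtain ⟨w, hw⟩ := h; exact ⟨w, fun _ => hw⟩
    · exact ⟨f, fun h' => absurd h' h⟩
  choose uu huu using hex
  -- facts about elements of D k
  have hmemD : ∀ s : S, s ∈ D k → ∃ w : S, inv w * w = inv s * s ∧ w * inv w = e k :=
    fun s hs => (hDk k s).1 hs
  have hmemD' : ∀ s : S, s ∈ D k → ∃ w : S, inv w * w = s * inv s ∧ w * inv w = e k := by
    intro s hs
    refine R_trans inv hinv ⟨inv s, ?_, ?_⟩ (hmemD s hs)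
    · rw [inv_invo inv hinv]
    · rw [inv_invo inv hinv]
  rw [sq, ← Finset.card_product, ← Finset.card_product]
  refine Finset.card_nbij'
    (fun s => ((s * inv s, inv s * s), uu (s * inv s) * s * inv (uu (inv s * s))))
    (fun p => inv (uu p.1.1) * p.2 * uu p.1.2) ?_ ?_ ?_ ?_
  · -- forward map lands in the product
    intro s hs
    obtain ⟨hu1, hu2⟩ := huu (s * inv s) (hmemD' s hs)
    obtain ⟨hv1, hv2⟩ := huu (inv s * s) (hmemD s hs)
    simp only [Finset.mem_coe, Finset.mem_product, Finset.mem_filter, Finset.mem_univ, true_and]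
    refine ⟨⟨⟨?_, mi_idem inv hinv s⟩, ⟨?_, im_idem inv hinv s⟩⟩, ?_, ?_⟩
    · -- s * inv s ∈ D k
      rw [hDk k (s * inv s), inv_idem inv hinv (mi_idem inv hinv s), mi_idem inv hinv s]
      exact hmemD' s hs
    · -- inv s * s ∈ D k
      rw [hDk k (inv s * s), inv_idem inv hinv (im_idem inv hinv s), im_idem inv hinv s]
      exact hmemD s hs
    · exact G1 inv hinv hu1 hv1 hv2
    · exact G2 inv hinv hu1 hu2 hv1
  · -- backward map lands in D k
    rintro ⟨⟨f, f'⟩, g⟩ hp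
    simp only [Finset.mem_coe, Finset.mem_product, Finset.mem_filter, Finset.mem_univ, true_and] at hp
    obtain ⟨⟨⟨hfD, hf⟩, hf'D, hf'⟩, hg1, hg2⟩ := hp
    have hRf' : ∃ w : S, inv w * w = f' ∧ w * inv w = e k := by
      have := hmemD f' hf'D
      rwa [inv_idem inv hinv hf', hf'] at this
    have hRf : ∃ w : S, inv w * w = f ∧ w * inv w = e k := by
      have := hmemD f hfD
      rwa [inv_idem inv hinv hf, hf] at this
    obtain ⟨hu1, hu2⟩ := huu f hRf
    obtain ⟨hv1, hv2⟩ := huu f' hRf'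
    rw [Finset.mem_coe, hDk k]
    rw [T1 inv hinv hu2 hv1 hv2 hg1 hg2]
    exact hRf'
  · -- left inverse
    intro s hs
    obtain ⟨hu1, hu2⟩ := huu (s * inv s) (hmemD' s hs)
    obtain ⟨hv1, hv2⟩ := huu (inv s * s) (hmemD s hs)
    exact J inv hinv hu1 hv1
  · -- right inverse
    rintro ⟨⟨f, f'⟩, g⟩ hp
    simp only [Finset.mem_coe, Finset.mem_product, Finset.mem_filter, Finset.mem_univ, true_and] at hp
    obtain ⟨⟨⟨hfD, hf⟩, hf'D, hf'⟩, hg1, hg2⟩ := hp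
    have hRf' : ∃ w : S, inv w * w = f' ∧ w * inv w = e k := by
      have := hmemD f' hf'D
      rwa [inv_idem inv hinv hf', hf'] at this
    have hRf : ∃ w : S, inv w * w = f ∧ w * inv w = e k := by
      have := hmemD f hfD
      rwa [inv_idem inv hinv hf, hf] at this
    obtain ⟨hu1, hu2⟩ := huu f hRf
    obtain ⟨hv1, hv2⟩ := huu f' hRf'
    have e1 : (inv (uu f) * g * uu f') * inv (inv (uu f) * g * uu f') = f :=
      T2 inv hinv hu1 hu2 hv2 hg1 hg2
    have e2 : inv (inv (uu f) * g * uu f') * (inv (uu f) * g * uu f') = f' :=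
      T1 inv hinv hu2 hv1 hv2 hg1 hg2
    simp only [e1, e2]
    rw [T3 inv hinv hu2 hv2 hg1 hg2]
end
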